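/- Fix an integer C ≥ 1 and logit vectors a₀, b₀ ∈ ℝ^C. Let s = σ(a₀) and define the weights w_{j,k} = s_j · s_k. Define the decoupled loss G(a, b) = (1/4) · ∑_{j=1}^C ∑_{k=1}^C w_{j,k} · ((a_j − a_k) − (b₀_j − b₀_k))² − ∑_{j=1}^C s_j · log σ(b)_j (i.e., the DKL loss with α = β = 1 in which the weights, the second-argument differences in the weighted-MSE term, and the soft labels in the cross-entropy term are frozen at a₀, b₀). Then for every index i: (1) the partial derivative of a ↦ G(a, b₀) with respect to a_i, evaluated at a = a₀, equals the partial derivative of a ↦ KL(σ(a) ‖ σ(b₀)) with respect to a_i evaluated at a = a₀; and (2) the partial derivative of b ↦ G(a₀, b) with respect to b_i, evaluated at b = b₀, equals the partial derivative of b ↦ KL(σ(a₀) ‖ σ(b)) with respect to b_i evaluated at b = b₀. Hence the DKL loss with α = β = 1 produces exactly the same gradients as the KL loss at every point. -/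

import Mathlib

open Finset

/-- Softmax of a logit vector. -/
noncomputable def softmax {C : ℕ} (a : Fin C → ℝ) (i : Fin C) : ℝ :=
  Real.exp (a i) / ∑ j, Real.exp (a j)

/-- KL divergence loss between two vectors with positive entries. -/
noncomputable def klLoss {C : ℕ} (p q : Fin C → ℝ) : ℝ :=
  ∑ j, p j * Real.log (p j / q j)

lemma sumExp_pos {C : ℕ} (hC : 1 ≤ C) (a : Fin C → ℝ) : 0 < ∑ j, Real.exp (a j) := by
  have : Nonempty (Fin C) := ⟨⟨0, hC⟩⟩
  exact Finset.sum_pos (fun j _ => Real.exp_pos _) Finset.univ_nonempty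

lemma softmax_pos' {C : ℕ} (hC : 1 ≤ C) (a : Fin C → ℝ) (j : Fin C) : 0 < softmax a j :=
  div_pos (Real.exp_pos _) (sumExp_pos hC a)

lemma sum_softmax {C : ℕ} (hC : 1 ≤ C) (a : Fin C → ℝ) : ∑ j, softmax a j = 1 := by
  simp only [softmax, ← Finset.sum_div]
  exact div_self (sumExp_pos hC a).ne'

lemma log_softmax' {C : ℕ} (hC : 1 ≤ C) (a : Fin C → ℝ) (j : Fin C) :
    Real.log (softmax a j) = a j - Real.log (∑ k, Real.exp (a k)) := by
  rw [softmax, Real.log_div (Real.exp_ne_zero _) (sumExp_pos hC a).ne', Real.log_exp]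

lemma update_hasDerivAt {C : ℕ} (a : Fin C → ℝ) (i j : Fin C) (t : ℝ) :
    HasDerivAt (fun t : ℝ => Function.update a i t j) (if j = i then 1 else 0) t := by
  rcases eq_or_ne j i with h | h
  · subst h
    simpa [Function.update_self] using (hasDerivAt_id' t)
  · simpa [Function.update_of_ne h, h] using hasDerivAt_const t (a j)

lemma klLoss_softmax {C : ℕ} (hC : 1 ≤ C) (a b : Fin C → ℝ) :
    klLoss (softmax a) (softmax b) =
      (∑ j, Real.exp (a j) * (a j - b j)) / (∑ j, Real.exp (a j))
        - Real.log (∑ j, Real.exp (a j)) + Real.log (∑ j, Real.exp (b j)) := by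
  have hZa := sumExp_pos hC a
  have hZb := sumExp_pos hC b
  have hterm : ∀ j : Fin C, softmax a j * Real.log (softmax a j / softmax b j) =
      Real.exp (a j) * (a j - b j) / (∑ k, Real.exp (a k)) +
        softmax a j * (Real.log (∑ k, Real.exp (b k)) - Real.log (∑ k, Real.exp (a k))) := by
    intro j
    rw [Real.log_div (softmax_pos' hC a j).ne' (softmax_pos' hC b j).ne',
      log_softmax' hC a j, log_softmax' hC b j]
    unfold softmax
    ring
  rw [klLoss, Finset.sum_congr rfl (fun j _ => hterm j), Finset.sum_add_distrib,
    ← Finset.sum_div, ← Finset.sum_mul, sum_softmax hC a, one_mul]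
  ring

lemma ce_softmax {C : ℕ} (hC : 1 ≤ C) (a b : Fin C → ℝ) :
    ∑ j, softmax a j * Real.log (softmax b j) =
      (∑ j, Real.exp (a j) * b j) / (∑ j, Real.exp (a j))
        - Real.log (∑ j, Real.exp (b j)) := by
  have hterm : ∀ j : Fin C, softmax a j * Real.log (softmax b j) =
      Real.exp (a j) * b j / (∑ k, Real.exp (a k)) -
        softmax a j * Real.log (∑ k, Real.exp (b k)) := by
    intro j
    rw [log_softmax' hC b j]
    unfold softmax
    ring
  rw [Finset.sum_congr rfl (fun j _ => hterm j), Finset.sum_sub_distrib,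
    ← Finset.sum_div, ← Finset.sum_mul, sum_softmax hC a, one_mul]

/-- The decoupled KL (DKL) loss with α = β = 1, in which the weights `w`,
the second-argument differences in the wMSE term, and the soft labels in the
cross-entropy term are all frozen at the reference logits `a₀`, `b₀`. -/
noncomputable def dklLoss {C : ℕ} (a₀ b₀ : Fin C → ℝ) (a b : Fin C → ℝ) : ℝ :=
  (1 / 4) * ∑ j, ∑ k, (softmax a₀ j * softmax a₀ k) *
      ((a j - a k) - (b₀ j - b₀ k)) ^ 2
    - ∑ j, softmax a₀ j * Real.log (softmax b j)

set_option maxHeartbeats 1000000 in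
/-- The DKL loss with α = β = 1 produces exactly the same gradients as the KL
loss, in both arguments, at every point. -/
theorem dkl_eq_kl_gradients (C : ℕ) (hC : 1 ≤ C) (a₀ b₀ : Fin C → ℝ) :
    ∀ i : Fin C,
      (∃ d : ℝ,
        HasDerivAt (fun t : ℝ => dklLoss a₀ b₀ (Function.update a₀ i t) b₀) d (a₀ i) ∧
        HasDerivAt (fun t : ℝ =>
          klLoss (softmax (Function.update a₀ i t)) (softmax b₀)) d (a₀ i)) ∧
      (∃ d : ℝ,
        HasDerivAt (fun t : ℝ => dklLoss a₀ b₀ a₀ (Function.update b₀ i t)) d (b₀ i) ∧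
        HasDerivAt (fun t : ℝ =>
          klLoss (softmax a₀) (softmax (Function.update b₀ i t))) d (b₀ i)) := by

  intro i
  constructor
  ·
    have hZa := sumExp_pos hC a₀
    have hZb := sumExp_pos hC b₀
    set Za := ∑ j, Real.exp (a₀ j) with hZadef
    set Zb := ∑ j, Real.exp (b₀ j) with hZbdef
    set N := ∑ k, Real.exp (a₀ k) * (a₀ k - b₀ k) with hNdef
    have hZane : Za ≠ 0 := hZa.ne'
    have hs : ∀ k, softmax a₀ k = Real.exp (a₀ k) / Za := fun k => rfl
    refine ⟨Real.exp (a₀ i) * (a₀ i - b₀ i) / Za - Real.exp (a₀ i) * N / Za ^ 2, ?_, ?_⟩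
    · -- dkl side
      simp only [dklLoss]
      have hQ : HasDerivAt (fun t : ℝ => ∑ j, ∑ k, (softmax a₀ j * softmax a₀ k) *
            ((Function.update a₀ i t j - Function.update a₀ i t k) - (b₀ j - b₀ k)) ^ 2)
          (∑ j, ∑ k, (softmax a₀ j * softmax a₀ k) *
            (((2:ℕ):ℝ) * ((Function.update a₀ i (a₀ i) j - Function.update a₀ i (a₀ i) k)
                - (b₀ j - b₀ k)) ^ (2 - 1) *
              ((if j = i then 1 else 0) - (if k = i then 1 else 0)))) (a₀ i) :=
        HasDerivAt.fun_sum fun j _ => HasDerivAt.fun_sum fun k _ =>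
          ((((update_hasDerivAt a₀ i j _).sub (update_hasDerivAt a₀ i k _)).sub_const
            (b₀ j - b₀ k)).pow 2).const_mul _
      simp only [Function.update_eq_self] at hQ
      have h := (hQ.const_mul (1 / 4 : ℝ)).sub_const (∑ j, softmax a₀ j * Real.log (softmax b₀ j))
      refine h.congr_deriv ?_; symm
      have hsummand : ∀ j k : Fin C, (softmax a₀ j * softmax a₀ k) *
          (((2:ℕ):ℝ) * ((a₀ j - a₀ k) - (b₀ j - b₀ k)) ^ (2 - 1) *
            ((if j = i then 1 else 0) - (if k = i then 1 else 0))) =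
          (if j = i then 2 * (softmax a₀ j * softmax a₀ k) * ((a₀ j - a₀ k) - (b₀ j - b₀ k)) else 0)
          - (if k = i then 2 * (softmax a₀ j * softmax a₀ k) * ((a₀ j - a₀ k) - (b₀ j - b₀ k)) else 0) := by
        intro j k
        rcases eq_or_ne j i with hj | hj <;> rcases eq_or_ne k i with hk | hk <;>
          simp [hj, hk] <;> ring
      simp only [hsummand, Finset.sum_sub_distrib]
      rw [Finset.sum_comm (f := fun j k => if j = i then
        2 * (softmax a₀ j * softmax a₀ k) * ((a₀ j - a₀ k) - (b₀ j - b₀ k)) else 0)]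
      simp only [Finset.sum_ite_eq', Finset.mem_univ, if_true]
      -- now: d = 1/4 * (∑ k, g i k - ∑ j, g j i)
      have hanti : ∀ j : Fin C, 2 * (softmax a₀ j * softmax a₀ i) * ((a₀ j - a₀ i) - (b₀ j - b₀ i))
          = -(2 * (softmax a₀ i * softmax a₀ j) * ((a₀ i - a₀ j) - (b₀ i - b₀ j))) := by
        intro j; ring
      simp only [hanti, Finset.sum_neg_distrib, sub_neg_eq_add]
      have hexpand : ∀ k : Fin C, 2 * (softmax a₀ i * softmax a₀ k) * ((a₀ i - a₀ k) - (b₀ i - b₀ k))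
          = (2 * softmax a₀ i * (a₀ i - b₀ i)) * softmax a₀ k
            - (2 * softmax a₀ i / Za) * (Real.exp (a₀ k) * (a₀ k - b₀ k)) := by
        intro k
        rw [hs i, hs k]
        field_simp
        ring
      simp only [hexpand, Finset.sum_sub_distrib, ← Finset.mul_sum, sum_softmax hC a₀, ← hNdef]
      rw [hs i]
      field_simp
      ring
    · -- kl side
      have hfun : (fun t : ℝ => klLoss (softmax (Function.update a₀ i t)) (softmax b₀)) =
          fun t : ℝ => (∑ j, Real.exp (Function.update a₀ i t j) * (Function.update a₀ i t j - b₀ j))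
              / (∑ j, Real.exp (Function.update a₀ i t j))
            - Real.log (∑ j, Real.exp (Function.update a₀ i t j)) + Real.log Zb := by
        funext t
        rw [klLoss_softmax hC]
      rw [hfun]
      have hN' : HasDerivAt (fun t : ℝ => ∑ j, Real.exp (Function.update a₀ i t j) *
            (Function.update a₀ i t j - b₀ j))
          (∑ j, (Real.exp (Function.update a₀ i (a₀ i) j) * (if j = i then 1 else 0) *
              (Function.update a₀ i (a₀ i) j - b₀ j)
            + Real.exp (Function.update a₀ i (a₀ i) j) * (if j = i then 1 else 0))) (a₀ i) :=
        HasDerivAt.fun_sum fun j _ =>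
          (update_hasDerivAt a₀ i j _).exp.mul ((update_hasDerivAt a₀ i j _).sub_const (b₀ j))
      have hZ : HasDerivAt (fun t : ℝ => ∑ j, Real.exp (Function.update a₀ i t j))
          (∑ j, Real.exp (Function.update a₀ i (a₀ i) j) * (if j = i then 1 else 0)) (a₀ i) :=
        HasDerivAt.fun_sum fun j _ => (update_hasDerivAt a₀ i j _).exp
      simp only [Function.update_eq_self] at hN' hZ
      have hne : (fun t : ℝ => ∑ j, Real.exp (Function.update a₀ i t j)) (a₀ i) ≠ 0 := by
        simp only [Function.update_eq_self]; exact hZa.ne'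
      have h := ((hN'.div hZ hne).sub (hZ.log hne)).add_const (Real.log Zb)
      simp only [Function.update_eq_self] at h
      refine h.congr_deriv ?_; symm
      simp only [mul_ite, ite_mul, mul_one, mul_zero, zero_mul, add_zero, zero_add,
        Finset.sum_add_distrib, Finset.sum_ite_eq', Finset.mem_univ, if_true, ← hNdef, ← hZadef]
      field_simp
      ring
  ·
    have hZa := sumExp_pos hC a₀
    have hZb := sumExp_pos hC b₀
    set Za := ∑ j, Real.exp (a₀ j) with hZadef
    set Zb := ∑ j, Real.exp (b₀ j) with hZbdef
    refine ⟨Real.exp (b₀ i) / Zb - Real.exp (a₀ i) / Za, ?_, ?_⟩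
    · -- dkl side
      have hfun : (fun t : ℝ => dklLoss a₀ b₀ a₀ (Function.update b₀ i t)) =
          fun t : ℝ => (1 / 4) * ∑ j, ∑ k, (softmax a₀ j * softmax a₀ k) *
              ((a₀ j - a₀ k) - (b₀ j - b₀ k)) ^ 2
            - ((∑ j, Real.exp (a₀ j) * Function.update b₀ i t j) / Za
                - Real.log (∑ j, Real.exp (Function.update b₀ i t j))) := by
        funext t
        rw [dklLoss, ce_softmax hC]
      rw [hfun]
      have hM : HasDerivAt (fun t : ℝ => ∑ j, Real.exp (a₀ j) * Function.update b₀ i t j)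
          (∑ j, Real.exp (a₀ j) * (if j = i then 1 else 0)) (b₀ i) :=
        HasDerivAt.fun_sum fun j _ => (update_hasDerivAt b₀ i j _).const_mul _
      have hZ : HasDerivAt (fun t : ℝ => ∑ j, Real.exp (Function.update b₀ i t j))
          (∑ j, Real.exp (Function.update b₀ i (b₀ i) j) * (if j = i then 1 else 0)) (b₀ i) :=
        HasDerivAt.fun_sum fun j _ => (update_hasDerivAt b₀ i j _).exp
      simp only [Function.update_eq_self] at hZ
      have hlog := hZ.log ?_
      · have h := ((hM.div_const Za).sub hlog).const_sub
          ((1 / 4) * ∑ j, ∑ k, (softmax a₀ j * softmax a₀ k) *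
              ((a₀ j - a₀ k) - (b₀ j - b₀ k)) ^ 2)
        refine h.congr_deriv ?_; symm
        simp [mul_ite, mul_one, mul_zero, Finset.sum_ite_eq', ← hZbdef]
      · rw [Function.update_eq_self]; exact hZb.ne'
    · -- kl side
      have hfun : (fun t : ℝ => klLoss (softmax a₀) (softmax (Function.update b₀ i t))) =
          fun t : ℝ => (∑ j, Real.exp (a₀ j) * (a₀ j - Function.update b₀ i t j)) / Za
            - Real.log Za + Real.log (∑ j, Real.exp (Function.update b₀ i t j)) := by
        funext t
        rw [klLoss_softmax hC]
      rw [hfun]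
      have hP : HasDerivAt (fun t : ℝ => ∑ j, Real.exp (a₀ j) * (a₀ j - Function.update b₀ i t j))
          (∑ j, Real.exp (a₀ j) * (0 - if j = i then 1 else 0)) (b₀ i) :=
        HasDerivAt.fun_sum fun j _ =>
          ((hasDerivAt_const _ (a₀ j)).sub (update_hasDerivAt b₀ i j _)).const_mul _
      have hZ : HasDerivAt (fun t : ℝ => ∑ j, Real.exp (Function.update b₀ i t j))
          (∑ j, Real.exp (Function.update b₀ i (b₀ i) j) * (if j = i then 1 else 0)) (b₀ i) :=
        HasDerivAt.fun_sum fun j _ => (update_hasDerivAt b₀ i j _).exp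
      simp only [Function.update_eq_self] at hZ
      have h := ((hP.div_const Za).sub_const (Real.log Za)).add (hZ.log (by rw [Function.update_eq_self]; exact hZb.ne'))
      refine h.congr_deriv ?_; symm
      simp [mul_ite, mul_one, mul_zero, Finset.sum_ite_eq']
      ring
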